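/- Refinement via piecewise approximation: let K = s(d+1). Suppose p is (η,s)-piecewise degree-d (i.e., there is an s-piecewise degree-d distribution q with TV(p,q) ≤ η), and suppose p̂ satisfies ‖p - p̂‖_{A_K} ≤ ζ. If p* is any s-piecewise degree-d distribution minimizing ‖p̂ - p*‖_{A_K} up to additive error η, then TV(p, p*) ≤ 2ζ + 4η. -/

import Mathlib

open Finset
open scoped Classical

/-- `S` is a union of at most `K` pairwise disjoint intervals inside `{0, ..., n-1}`. -/
def IsUnionOfIntervals (n K : ℕ) (S : Finset ℕ) : Prop :=
  ∃ I : Finset (ℕ × ℕ),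
    I.card ≤ K ∧
    (∀ ab ∈ I, ab.1 ≤ ab.2 ∧ ab.2 < n) ∧
    (∀ ab ∈ I, ∀ cd ∈ I, ab ≠ cd → Disjoint (Finset.Icc ab.1 ab.2) (Finset.Icc cd.1 cd.2)) ∧
    S = I.biUnion fun ab => Finset.Icc ab.1 ab.2

/-- The `A_K` distance `‖p - q‖_{A_K} = max_{S ∈ A_K} |p(S) - q(S)|`. -/
noncomputable def akDist (n K : ℕ) (p q : ℕ → ℝ) : ℝ :=
  sSup {x : ℝ | ∃ S : Finset ℕ, IsUnionOfIntervals n K S ∧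
    x = |∑ i ∈ S, p i - ∑ i ∈ S, q i|}

/-- Total variation distance of vectors on `{0, ..., n-1}`: half the `L1` distance. -/
noncomputable def tvDist (n : ℕ) (p q : ℕ → ℝ) : ℝ :=
  (1 / 2) * ∑ i ∈ Finset.range n, |p i - q i|

/-- `f` is an `s`-piecewise degree-`d` function on `{0, ..., n-1}`. -/
def IsPiecewisePoly (n s d : ℕ) (f : ℕ → ℝ) : Prop :=
  ∃ (I : Finset (ℕ × ℕ)) (P : ℕ × ℕ → Polynomial ℝ),
    I.card ≤ s ∧
    (∀ ab ∈ I, (P ab).natDegree ≤ d) ∧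
    (∀ ab ∈ I, ∀ cd ∈ I, ab ≠ cd → Disjoint (Finset.Icc ab.1 ab.2) (Finset.Icc cd.1 cd.2)) ∧
    Finset.range n = I.biUnion (fun ab => Finset.Icc ab.1 ab.2) ∧
    ∀ ab ∈ I, ∀ x ∈ Finset.Icc ab.1 ab.2, f x = (P ab).eval (x : ℝ)

/-- `f` is a probability distribution on `{0, ..., n-1}`. -/
def IsDistribution (n : ℕ) (f : ℕ → ℝ) : Prop :=
  (∀ x < n, 0 ≤ f x) ∧ ∑ x ∈ Finset.range n, f x = 1

lemma empty_isUnion (n K : ℕ) : IsUnionOfIntervals n K (∅ : Finset ℕ) := by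
  refine ⟨∅, by simp, by simp, by simp, by simp⟩

lemma isUnion_subset_range {n K : ℕ} {S : Finset ℕ} (h : IsUnionOfIntervals n K S) :
    S ⊆ Finset.range n := by
  obtain ⟨I, -, hmem, -, rfl⟩ := h
  intro i hi
  rw [Finset.mem_biUnion] at hi
  obtain ⟨ab, hab, hi⟩ := hi
  rw [Finset.mem_Icc] at hi
  exact Finset.mem_range.2 (lt_of_le_of_lt hi.2 (hmem ab hab).2)

lemma akSet_nonempty (n K : ℕ) (p q : ℕ → ℝ) :
    Set.Nonempty {x : ℝ | ∃ S : Finset ℕ, IsUnionOfIntervals n K S ∧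
      x = |∑ i ∈ S, p i - ∑ i ∈ S, q i|} :=
  ⟨0, ∅, empty_isUnion n K, by simp⟩

lemma akSet_bddAbove (n K : ℕ) (p q : ℕ → ℝ) :
    BddAbove {x : ℝ | ∃ S : Finset ℕ, IsUnionOfIntervals n K S ∧
      x = |∑ i ∈ S, p i - ∑ i ∈ S, q i|} := by
  refine ⟨∑ i ∈ Finset.range n, |p i - q i|, ?_⟩
  rintro x ⟨S, hS, rfl⟩
  rw [← Finset.sum_sub_distrib]
  calc |∑ i ∈ S, (p i - q i)| ≤ ∑ i ∈ S, |p i - q i| := Finset.abs_sum_le_sum_abs _ _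
    _ ≤ ∑ i ∈ Finset.range n, |p i - q i| :=
      Finset.sum_le_sum_of_subset_of_nonneg (isUnion_subset_range hS)
        (fun i _ _ => abs_nonneg _)

lemma le_akDist {n K : ℕ} {p q : ℕ → ℝ} {S : Finset ℕ} (hS : IsUnionOfIntervals n K S) :
    |∑ i ∈ S, p i - ∑ i ∈ S, q i| ≤ akDist n K p q :=
  le_csSup (akSet_bddAbove n K p q) ⟨S, hS, rfl⟩

lemma akDist_nonneg (n K : ℕ) (p q : ℕ → ℝ) : 0 ≤ akDist n K p q := by
  have := le_akDist (p := p) (q := q) (empty_isUnion n K)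
  simpa using this

lemma akDist_comm (n K : ℕ) (p q : ℕ → ℝ) : akDist n K p q = akDist n K q p := by
  unfold akDist
  congr 1
  ext x
  constructor
  · rintro ⟨S, hS, rfl⟩; exact ⟨S, hS, (abs_sub_comm _ _)⟩
  · rintro ⟨S, hS, rfl⟩; exact ⟨S, hS, (abs_sub_comm _ _)⟩

lemma akDist_triangle (n K : ℕ) (p q r : ℕ → ℝ) :
    akDist n K p r ≤ akDist n K p q + akDist n K q r := by
  apply csSup_le (akSet_nonempty n K p r)
  rintro x ⟨S, hS, rfl⟩
  calc |∑ i ∈ S, p i - ∑ i ∈ S, r i|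
      ≤ |∑ i ∈ S, p i - ∑ i ∈ S, q i| + |∑ i ∈ S, q i - ∑ i ∈ S, r i| := abs_sub_le _ _ _
    _ ≤ akDist n K p q + akDist n K q r := add_le_add (le_akDist hS) (le_akDist hS)

lemma tvDist_triangle (n : ℕ) (p q r : ℕ → ℝ) :
    tvDist n p r ≤ tvDist n p q + tvDist n q r := by
  unfold tvDist
  rw [← mul_add, ← Finset.sum_add_distrib]
  gcongr with i hi
  exact abs_sub_le _ _ _

-- half-L1 bound on a subset assuming total sum zero
lemma abs_subset_sum_le {n : ℕ} {u : ℕ → ℝ} (hsum : ∑ i ∈ Finset.range n, u i = 0)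
    {S : Finset ℕ} (hS : S ⊆ Finset.range n) :
    |∑ i ∈ S, u i| ≤ (1 / 2) * ∑ i ∈ Finset.range n, |u i| := by
  set T : ℝ := ∑ i ∈ (Finset.range n).filter (fun i => 0 < u i), u i with hT
  have habs : ∑ i ∈ Finset.range n, |u i| = 2 * T := by
    have hsplit := Finset.sum_filter_add_sum_filter_not (Finset.range n) (fun i => 0 < u i) u
    have habs' : ∑ i ∈ Finset.range n, |u i| =
        ∑ i ∈ (Finset.range n).filter (fun i => 0 < u i), u i
        + ∑ i ∈ (Finset.range n).filter (fun i => ¬ 0 < u i), (-u i) := by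
      rw [← Finset.sum_filter_add_sum_filter_not (Finset.range n) (fun i => 0 < u i) (fun i => |u i|)]
      congr 1
      · exact Finset.sum_congr rfl (fun i hi => abs_of_pos (Finset.mem_filter.1 hi).2)
      · exact Finset.sum_congr rfl (fun i hi => abs_of_nonpos (le_of_not_gt (Finset.mem_filter.1 hi).2))
    have h2 : ∑ i ∈ (Finset.range n).filter (fun i => ¬ 0 < u i), (-u i) = T := by
      rw [Finset.sum_neg_distrib]
      have : ∑ i ∈ (Finset.range n).filter (fun i => ¬ 0 < u i), u i = -T := by
        rw [hT]; linarith [hsplit, hsum]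
      rw [this, neg_neg]
    rw [habs', h2]; ring
  have hpos : ∀ x, x ⊆ Finset.range n → ∑ i ∈ x, u i ≤ T := by
    intro x hx
    calc ∑ i ∈ x, u i ≤ ∑ i ∈ x.filter (fun i => 0 < u i), u i := by
          rw [← Finset.sum_filter_add_sum_filter_not x (fun i => 0 < u i) u]
          have : ∑ i ∈ x.filter (fun i => ¬ 0 < u i), u i ≤ 0 :=
            Finset.sum_nonpos (fun i hi => le_of_not_gt (Finset.mem_filter.1 hi).2)
          linarith
      _ ≤ T := Finset.sum_le_sum_of_subset_of_nonneg
          (Finset.filter_subset_filter _ hx) (fun i hi hni => le_of_lt (Finset.mem_filter.1 hi).2)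
  have h1 : ∑ i ∈ S, u i ≤ T := hpos S hS
  have h2 : -(∑ i ∈ S, u i) ≤ T := by
    have hcompl : ∑ i ∈ Finset.range n \ S, u i ≤ T := hpos _ (Finset.sdiff_subset)
    have hsd : ∑ i ∈ Finset.range n \ S, u i + ∑ i ∈ S, u i = ∑ i ∈ Finset.range n, u i :=
      Finset.sum_sdiff hS
    rw [hsum] at hsd
    linarith
  rw [habs, abs_le]
  constructor <;> linarith

section Decomp

variable {n : ℕ} {S : Finset ℕ}

lemma runEx (hS : S ⊆ Finset.range n) (l : ℕ) : ∃ k, l + 1 + k ∉ S := by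
  refine ⟨n, fun h => ?_⟩
  have := Finset.mem_range.1 (hS h); omega

noncomputable def runEnd (hS : S ⊆ Finset.range n) (l : ℕ) : ℕ :=
  l + Nat.find (runEx hS l)

lemma runEnd_mem (hS : S ⊆ Finset.range n) {l : ℕ} (hl : l ∈ S) :
    ∀ x, l ≤ x → x ≤ runEnd hS l → x ∈ S := by
  intro x h1 h2
  rcases Nat.eq_or_lt_of_le h1 with rfl | hlt
  · exact hl
  · have hk : x - l - 1 < Nat.find (runEx hS l) := by
      unfold runEnd at h2; omega
    have := Nat.find_min (runEx hS l) hk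
    simp only [not_not] at this
    have : l + 1 + (x - l - 1) ∈ S := this
    convert this using 2
    omega

lemma runEnd_succ_not_mem (hS : S ⊆ Finset.range n) (l : ℕ) :
    runEnd hS l + 1 ∉ S := by
  have := Nat.find_spec (runEx hS l)
  unfold runEnd
  convert this using 2
  omega

lemma le_runEnd (hS : S ⊆ Finset.range n) (l : ℕ) : l ≤ runEnd hS l :=
  Nat.le_add_right _ _

/-- A set whose number of "left endpoints" is at most `K` is a union of at most
`K` intervals. -/
lemma isUnion_of_card_left_endpoints (hS : S ⊆ Finset.range n) {K : ℕ}
    (hL : (S.filter (fun i => i = 0 ∨ i - 1 ∉ S)).card ≤ K) :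
    IsUnionOfIntervals n K S := by
  set L := S.filter (fun i => i = 0 ∨ i - 1 ∉ S) with hLdef
  refine ⟨L.image (fun l => (l, runEnd hS l)), ?_, ?_, ?_, ?_⟩
  · exact le_trans Finset.card_image_le hL
  · rintro ab hab
    rw [Finset.mem_image] at hab
    obtain ⟨l, hl, rfl⟩ := hab
    have hlS : l ∈ S := (Finset.mem_filter.1 hl).1
    have hend : runEnd hS l ∈ S := runEnd_mem hS hlS _ (le_runEnd hS l) le_rfl
    exact ⟨le_runEnd hS l, Finset.mem_range.1 (hS hend)⟩
  · have key : ∀ l ∈ L, ∀ l' ∈ L, l < l' →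
        Disjoint (Finset.Icc l (runEnd hS l)) (Finset.Icc l' (runEnd hS l')) := by
      intro l hl l' hl' hlt
      have hl'S : l' ∈ S := (Finset.mem_filter.1 hl').1
      have hl'L : l' = 0 ∨ l' - 1 ∉ S := (Finset.mem_filter.1 hl').2
      have hlS : l ∈ S := (Finset.mem_filter.1 hl).1
      have hend : runEnd hS l < l' := by
        by_contra h
        push_neg at h
        have h1 : l' - 1 ∈ S := runEnd_mem hS hlS _ (by omega) (by omega)
        rcases hl'L with rfl | h2
        · omega
        · exact h2 h1
      rw [Finset.disjoint_left]
      intro a ha ha'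
      rw [Finset.mem_Icc] at ha ha'
      omega
    rintro ab hab cd hcd hne
    rw [Finset.mem_image] at hab hcd
    obtain ⟨l, hl, rfl⟩ := hab
    obtain ⟨l', hl', rfl⟩ := hcd
    have : l ≠ l' := fun h => hne (by rw [h])
    rcases lt_or_gt_of_ne this with h | h
    · exact key l hl l' hl' h
    · exact (key l' hl' l hl h).symm
  · apply Finset.Subset.antisymm
    · intro i hi
      induction i using Nat.strong_induction_on with
      | _ i ih =>
        by_cases hiL : i ∈ L
        · rw [Finset.mem_biUnion]
          exact ⟨(i, runEnd hS i), Finset.mem_image_of_mem _ hiL,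
            Finset.mem_Icc.2 ⟨le_rfl, le_runEnd hS i⟩⟩
        · have hi' : ¬(i = 0 ∨ i - 1 ∉ S) := by
            intro h
            exact hiL (Finset.mem_filter.2 ⟨hi, h⟩)
          push_neg at hi'
          obtain ⟨hne0, hprev⟩ := hi'
          have hprevU := ih (i-1) (by omega) hprev
          rw [Finset.mem_biUnion] at hprevU ⊢
          obtain ⟨ab, habI, habm⟩ := hprevU
          refine ⟨ab, habI, ?_⟩
          rw [Finset.mem_image] at habI
          obtain ⟨l, hl, rfl⟩ := habI
          rw [Finset.mem_Icc] at habm ⊢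
          refine ⟨by omega, ?_⟩
          by_contra h
          push_neg at h
          have heq : runEnd hS l + 1 = i := by omega
          have hnm := runEnd_succ_not_mem hS l
          rw [heq] at hnm
          exact hnm hi
    · intro i hi
      rw [Finset.mem_biUnion] at hi
      obtain ⟨ab, habI, habm⟩ := hi
      rw [Finset.mem_image] at habI
      obtain ⟨l, hl, rfl⟩ := habI
      rw [Finset.mem_Icc] at habm
      exact runEnd_mem hS (Finset.mem_filter.1 hl).1 _ habm.1 habm.2

end Decomp

lemma poly_root_between {f : Polynomial ℝ} {a b : ℝ} (hab : a ≤ b)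
    (ha : f.eval a ≤ 0) (hb : 0 < f.eval b) :
    ∃ r, a ≤ r ∧ r < b ∧ f.eval r = 0 := by
  have hcont : ContinuousOn (fun x => f.eval x) (Set.Icc a b) :=
    (Polynomial.continuous f).continuousOn
  have h0 : (0:ℝ) ∈ Set.Icc (f.eval a) (f.eval b) := ⟨ha, le_of_lt hb⟩
  have := intermediate_value_Icc hab hcont h0
  obtain ⟨r, hr, hr0⟩ := this
  simp only at hr0
  refine ⟨r, hr.1, ?_, hr0⟩
  rcases lt_or_eq_of_le hr.2 with h | h
  · exact h
  · subst h; rw [hr0] at hb; exact absurd hb (lt_irrefl 0)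

lemma key_exists_S (n s d : ℕ) (q t : ℕ → ℝ)
    (hq : IsPiecewisePoly n s d q) (ht : IsPiecewisePoly n s d t) :
    ∃ S : Finset ℕ, IsUnionOfIntervals n (s * (d + 1)) S ∧
      ∑ i ∈ S, (q i - t i) =
        ∑ i ∈ (Finset.range n).filter (fun i => 0 < q i - t i), (q i - t i) := by
  classical
  set u : ℕ → ℝ := fun i => q i - t i with hu
  rcases Nat.eq_zero_or_pos n with rfl | hn
  · exact ⟨∅, ⟨∅, by simp, by simp, by simp, by simp⟩, by simp⟩
  obtain ⟨Iq, Pq, hIqcard, hPqdeg, hIqdisj, hIqcover, hPq⟩ := hq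
  obtain ⟨It, Pt, hItcard, hPtdeg, hItdisj, hItcover, hPt⟩ := ht
  -- the candidate set
  set S : Finset ℕ := (Finset.range n).filter
    (fun i => ∃ j, j ≤ i ∧ 0 < u j ∧ ∀ x, j ≤ x → x ≤ i → 0 ≤ u x) with hSdef
  have hSsub : S ⊆ Finset.range n := Finset.filter_subset _ _
  -- S-membership facts
  have hmemS : ∀ i, i ∈ S ↔ (i < n ∧ ∃ j, j ≤ i ∧ 0 < u j ∧ ∀ x, j ≤ x → x ≤ i → 0 ≤ u x) := by
    intro i; rw [hSdef, Finset.mem_filter, Finset.mem_range]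
  have hSnonneg : ∀ i ∈ S, 0 ≤ u i := by
    intro i hi
    obtain ⟨-, j, hj, -, hall⟩ := (hmemS i).1 hi
    exact hall i hj le_rfl
  have hposS : ∀ i, i < n → 0 < u i → i ∈ S := by
    intro i hi hpos
    exact (hmemS i).2 ⟨hi, i, le_rfl, hpos, fun x h1 h2 => by
      have : x = i := le_antisymm h2 h1
      rw [this]; exact le_of_lt hpos⟩
  -- sum property
  have hsum : ∑ i ∈ S, u i = ∑ i ∈ (Finset.range n).filter (fun i => 0 < u i), u i := by
    have hsub2 : (Finset.range n).filter (fun i => 0 < u i) ⊆ S := by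
      intro i hi
      rw [Finset.mem_filter, Finset.mem_range] at hi
      exact hposS i hi.1 hi.2
    refine (Finset.sum_subset hsub2 ?_).symm
    intro i hiS hni
    rcases lt_or_eq_of_le (hSnonneg i hiS) with h | h
    · exact absurd (Finset.mem_filter.2 ⟨hSsub hiS, h⟩) hni
    · exact h.symm
  -- crossing sign facts
  have hup : ∀ c, c ∈ S → c ≠ 0 → c - 1 ∉ S → u (c - 1) ≤ 0 ∧ 0 < u c := by
    intro c hc hc0 hcp
    obtain ⟨hcn, j, hj, hjpos, hall⟩ := (hmemS c).1 hc
    have hjc : j = c := by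
      by_contra hne
      have hjlt : j ≤ c - 1 := by omega
      exact hcp ((hmemS (c-1)).2 ⟨by omega, j, hjlt, hjpos,
        fun x h1 h2 => hall x h1 (by omega)⟩)
    constructor
    · by_contra h
      push_neg at h
      exact hcp ((hmemS (c-1)).2 ⟨by omega, c - 1, le_rfl, h,
        fun x h1 h2 => by have : x = c - 1 := by omega
                          rw [this]; exact le_of_lt h⟩)
    · rw [← hjc]; exact hjpos
  have hdown : ∀ c, c ≠ 0 → c < n → c - 1 ∈ S → c ∉ S → 0 ≤ u (c - 1) ∧ u c < 0 := by
    intro c hc0 hcn hcp hc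
    refine ⟨hSnonneg _ hcp, ?_⟩
    by_contra h
    push_neg at h
    obtain ⟨-, j, hj, hjpos, hall⟩ := (hmemS (c-1)).1 hcp
    exact hc ((hmemS c).2 ⟨hcn, j, by omega, hjpos, fun x h1 h2 => by
      rcases Nat.lt_or_ge x c with hx | hx
      · exact hall x h1 (by omega)
      · have : x = c := by omega
        rw [this]; exact h⟩)
  -- piece assignment
  have hexq : ∀ i, ∃ ab, i < n → ab ∈ Iq ∧ ab.1 ≤ i ∧ i ≤ ab.2 := by
    intro i
    by_cases h : i < n
    · have : i ∈ Finset.range n := Finset.mem_range.2 h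
      rw [hIqcover, Finset.mem_biUnion] at this
      obtain ⟨ab, hab, hiab⟩ := this
      rw [Finset.mem_Icc] at hiab
      exact ⟨ab, fun _ => ⟨hab, hiab.1, hiab.2⟩⟩
    · exact ⟨(0,0), fun h' => absurd h' h⟩
  have hext : ∀ i, ∃ ab, i < n → ab ∈ It ∧ ab.1 ≤ i ∧ i ≤ ab.2 := by
    intro i
    by_cases h : i < n
    · have : i ∈ Finset.range n := Finset.mem_range.2 h
      rw [hItcover, Finset.mem_biUnion] at this
      obtain ⟨ab, hab, hiab⟩ := this
      rw [Finset.mem_Icc] at hiab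
      exact ⟨ab, fun _ => ⟨hab, hiab.1, hiab.2⟩⟩
    · exact ⟨(0,0), fun h' => absurd h' h⟩
  choose Aq hAq using hexq
  choose Bt hBt using hext
  have huniqq : ∀ i, i < n → ∀ ab ∈ Iq, ab.1 ≤ i → i ≤ ab.2 → ab = Aq i := by
    intro i hi ab hab h1 h2
    by_contra hne
    have hd := hIqdisj ab hab (Aq i) (hAq i hi).1 hne
    have := Finset.disjoint_left.1 hd (Finset.mem_Icc.2 ⟨h1, h2⟩)
    exact this (Finset.mem_Icc.2 ⟨(hAq i hi).2.1, (hAq i hi).2.2⟩)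
  have huniqt : ∀ i, i < n → ∀ ab ∈ It, ab.1 ≤ i → i ≤ ab.2 → ab = Bt i := by
    intro i hi ab hab h1 h2
    by_contra hne
    have hd := hItdisj ab hab (Bt i) (hBt i hi).1 hne
    have := Finset.disjoint_left.1 hd (Finset.mem_Icc.2 ⟨h1, h2⟩)
    exact this (Finset.mem_Icc.2 ⟨(hBt i hi).2.1, (hBt i hi).2.2⟩)
  -- s ≥ 1
  have hs1 : 1 ≤ s := by
    rcases Nat.eq_zero_or_pos s with rfl | h
    · exfalso
      have hIq0 : Iq = ∅ := Finset.card_eq_zero.1 (le_antisymm hIqcard (Nat.zero_le _))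
      have : (0:ℕ) ∈ Finset.range n := Finset.mem_range.2 hn
      rw [hIqcover, hIq0] at this
      simp at this
    · exact h
  -- L, D and injection
  set L : Finset ℕ := S.filter (fun i => i = 0 ∨ i - 1 ∉ S) with hLdef
  set D : Finset ℕ := (Finset.Icc 1 n).filter (fun j => j - 1 ∈ S ∧ j ∉ S) with hDdef
  have hLD : L.card ≤ D.card := by
    apply Finset.card_le_card_of_injOn (fun l => runEnd hSsub l + 1)
    · intro l hl
      have hlS : l ∈ S := (Finset.mem_filter.1 hl).1
      have hre : runEnd hSsub l ∈ S := runEnd_mem hSsub hlS _ (le_runEnd hSsub l) le_rfl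
      rw [hDdef, Finset.mem_coe, Finset.mem_filter, Finset.mem_Icc]
      beta_reduce
      refine ⟨⟨by omega, ?_⟩, ?_, runEnd_succ_not_mem hSsub l⟩
      · have := Finset.mem_range.1 (hSsub hre); omega
      · simpa using hre
    · intro l hl l' hl' heq
      by_contra hne
      -- wlog l < l'
      have key : ∀ a b, a ∈ L → b ∈ L → a < b → runEnd hSsub a + 1 ≠ runEnd hSsub b + 1 := by
        intro a b ha hb hab
        have haS : a ∈ S := (Finset.mem_filter.1 ha).1
        have hbS : b ∈ S := (Finset.mem_filter.1 hb).1
        have hbL : b = 0 ∨ b - 1 ∉ S := (Finset.mem_filter.1 hb).2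
        have hlt : runEnd hSsub a < b := by
          by_contra hge
          push_neg at hge
          have : b - 1 ∈ S := runEnd_mem hSsub haS _ (by omega) (by omega)
          rcases hbL with rfl | h2
          · omega
          · exact h2 this
        have := le_runEnd hSsub b
        omega
      rcases lt_or_gt_of_ne hne with h | h
      · exact key l l' hl hl' h heq
      · exact key l' l hl' hl h heq.symm
  set L' : Finset ℕ := L.filter (fun l => l ≠ 0) with hL'def
  set D' : Finset ℕ := D.filter (fun j => j < n) with hD'def
  have hL' : L.card ≤ L'.card + 1 := by
    have : L ⊆ insert 0 L' := by
      intro l hl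
      by_cases h : l = 0
      · rw [h]; exact Finset.mem_insert_self _ _
      · exact Finset.mem_insert_of_mem (Finset.mem_filter.2 ⟨hl, h⟩)
    calc L.card ≤ (insert 0 L').card := Finset.card_le_card this
      _ ≤ L'.card + 1 := Finset.card_insert_le _ _
  have hD' : D.card ≤ D'.card + 1 := by
    have : D ⊆ insert n D' := by
      intro j hj
      by_cases h : j < n
      · exact Finset.mem_insert_of_mem (Finset.mem_filter.2 ⟨hj, h⟩)
      · have : j ≤ n := (Finset.mem_Icc.1 (Finset.mem_filter.1 hj).1).2
        have : j = n := by omega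
        rw [this]; exact Finset.mem_insert_self _ _
    calc D.card ≤ (insert n D').card := Finset.card_le_card this
      _ ≤ D'.card + 1 := Finset.card_insert_le _ _
  set C : Finset ℕ := L' ∪ D' with hCdef
  have hdisjLD : Disjoint L' D' := by
    rw [Finset.disjoint_left]
    intro c hc hc'
    have h1 : c ∈ S := (Finset.mem_filter.1 (Finset.mem_filter.1 hc).1).1
    have h2 : c ∉ S := (Finset.mem_filter.1 (Finset.mem_filter.1 hc').1).2.2
    exact h2 h1
  have hCcard : C.card = L'.card + D'.card := Finset.card_union_of_disjoint hdisjLD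
  have hcross : ∀ c ∈ C, 1 ≤ c ∧ c < n ∧
      ((u (c-1) ≤ 0 ∧ 0 < u c) ∨ (0 ≤ u (c-1) ∧ u c < 0)) := by
    intro c hc
    rcases Finset.mem_union.1 hc with h | h
    · have hcL : c ∈ L := (Finset.mem_filter.1 h).1
      have hc0 : c ≠ 0 := (Finset.mem_filter.1 h).2
      have hcS : c ∈ S := (Finset.mem_filter.1 hcL).1
      have hcp : c - 1 ∉ S := by
        rcases (Finset.mem_filter.1 hcL).2 with h' | h'
        · exact absurd h' hc0
        · exact h'
      have hcn : c < n := Finset.mem_range.1 (hSsub hcS)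
      exact ⟨by omega, hcn, Or.inl (hup c hcS hc0 hcp)⟩
    · have hcD : c ∈ D := (Finset.mem_filter.1 h).1
      have hcn : c < n := (Finset.mem_filter.1 h).2
      have hc1 : 1 ≤ c := (Finset.mem_Icc.1 (Finset.mem_filter.1 hcD).1).1
      have hcp : c - 1 ∈ S := (Finset.mem_filter.1 hcD).2.1
      have hcS : c ∉ S := (Finset.mem_filter.1 hcD).2.2
      exact ⟨hc1, hcn, Or.inr (hdown c (by omega) hcn hcp hcS)⟩
  set Cb : Finset ℕ := C.filter (fun c => Aq (c-1) ≠ Aq c ∨ Bt (c-1) ≠ Bt c) with hCbdef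
  set Ci : Finset ℕ := C.filter (fun c => ¬(Aq (c-1) ≠ Aq c ∨ Bt (c-1) ≠ Bt c)) with hCidef
  have hsplitC : Cb.card + Ci.card = C.card :=
    Finset.card_filter_add_card_filter_not _
  have hfstq : ∀ c ∈ C, Aq (c-1) ≠ Aq c → (Aq c).1 = c := by
    intro c hc hne
    obtain ⟨hc1, hcn, -⟩ := hcross c hc
    have h1 : (Aq c).1 ≤ c := (hAq c hcn).2.1
    by_contra h
    have h2 : (Aq c).1 ≤ c - 1 := by omega
    exact hne (huniqq (c-1) (by omega) (Aq c) (hAq c hcn).1 h2 (by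
      have := (hAq c hcn).2.2; omega)).symm
  have hfstt : ∀ c ∈ C, Bt (c-1) ≠ Bt c → (Bt c).1 = c := by
    intro c hc hne
    obtain ⟨hc1, hcn, -⟩ := hcross c hc
    have h1 : (Bt c).1 ≤ c := (hBt c hcn).2.1
    by_contra h
    have h2 : (Bt c).1 ≤ c - 1 := by omega
    exact hne (huniqt (c-1) (by omega) (Bt c) (hBt c hcn).1 h2 (by
      have := (hBt c hcn).2.2; omega)).symm
  have h0q : (0:ℕ) ∈ Iq.image Prod.fst := by
    have h1 : (Aq 0).1 ≤ 0 := (hAq 0 hn).2.1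
    have h2 : (Aq 0).1 = 0 := by omega
    exact Finset.mem_image.2 ⟨Aq 0, (hAq 0 hn).1, h2⟩
  have h0t : (0:ℕ) ∈ It.image Prod.fst := by
    have h1 : (Bt 0).1 ≤ 0 := (hBt 0 hn).2.1
    have h2 : (Bt 0).1 = 0 := by omega
    exact Finset.mem_image.2 ⟨Bt 0, (hBt 0 hn).1, h2⟩
  have hCb : Cb.card ≤ (s - 1) + (s - 1) := by
    have hsub : Cb ⊆ ((Iq.image Prod.fst).erase 0) ∪ ((It.image Prod.fst).erase 0) := by
      intro c hc
      have hcC : c ∈ C := (Finset.mem_filter.1 hc).1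
      obtain ⟨hc1, hcn, -⟩ := hcross c hcC
      rcases (Finset.mem_filter.1 hc).2 with h | h
      · refine Finset.mem_union_left _ (Finset.mem_erase.2 ⟨by omega, ?_⟩)
        rw [← hfstq c hcC h]
        exact Finset.mem_image.2 ⟨Aq c, (hAq c hcn).1, rfl⟩
      · refine Finset.mem_union_right _ (Finset.mem_erase.2 ⟨by omega, ?_⟩)
        rw [← hfstt c hcC h]
        exact Finset.mem_image.2 ⟨Bt c, (hBt c hcn).1, rfl⟩
    calc Cb.card ≤ _ := Finset.card_le_card hsub
      _ ≤ ((Iq.image Prod.fst).erase 0).card + ((It.image Prod.fst).erase 0).card :=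
          Finset.card_union_le _ _
      _ ≤ (s - 1) + (s - 1) := by
          have e1 := Finset.card_erase_of_mem h0q
          have e2 := Finset.card_erase_of_mem h0t
          have i1 : (Iq.image Prod.fst).card ≤ s := le_trans Finset.card_image_le hIqcard
          have i2 : (It.image Prod.fst).card ≤ s := le_trans Finset.card_image_le hItcard
          omega
  set PF : Finset ((ℕ × ℕ) × (ℕ × ℕ)) := (Iq ×ˢ It).filter
    (fun π => ∃ i, i < n ∧ π.1.1 ≤ i ∧ i ≤ π.1.2 ∧ π.2.1 ≤ i ∧ i ≤ π.2.2) with hPFdef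
  have hPF : PF.card ≤ 2 * s - 1 := by
    have hmaps : ∀ π ∈ PF, max π.1.1 π.2.1 ∈
        insert 0 (((Iq.image Prod.fst).erase 0) ∪ ((It.image Prod.fst).erase 0)) := by
      intro π hπ
      have hπIq : π.1 ∈ Iq := (Finset.mem_product.1 (Finset.mem_filter.1 hπ).1).1
      have hπIt : π.2 ∈ It := (Finset.mem_product.1 (Finset.mem_filter.1 hπ).1).2
      by_cases h0 : max π.1.1 π.2.1 = 0
      · rw [h0]; exact Finset.mem_insert_self _ _
      · apply Finset.mem_insert_of_mem
        rcases max_choice π.1.1 π.2.1 with h | h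
        · exact Finset.mem_union_left _ (Finset.mem_erase.2 ⟨h0, by
            rw [h]; exact Finset.mem_image.2 ⟨π.1, hπIq, rfl⟩⟩)
        · exact Finset.mem_union_right _ (Finset.mem_erase.2 ⟨h0, by
            rw [h]; exact Finset.mem_image.2 ⟨π.2, hπIt, rfl⟩⟩)
    have hinj : ∀ π ∈ PF, ∀ π' ∈ PF, max π.1.1 π.2.1 = max π'.1.1 π'.2.1 → π = π' := by
      have hmm : ∀ π ∈ PF, max π.1.1 π.2.1 < n ∧
          π.1 = Aq (max π.1.1 π.2.1) ∧ π.2 = Bt (max π.1.1 π.2.1) := by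
        intro π hπ
        have hπIq : π.1 ∈ Iq := (Finset.mem_product.1 (Finset.mem_filter.1 hπ).1).1
        have hπIt : π.2 ∈ It := (Finset.mem_product.1 (Finset.mem_filter.1 hπ).1).2
        obtain ⟨i, hin, h11, h12, h21, h22⟩ := (Finset.mem_filter.1 hπ).2
        have hmi : max π.1.1 π.2.1 ≤ i := max_le h11 h21
        have hmn : max π.1.1 π.2.1 < n := lt_of_le_of_lt hmi hin
        exact ⟨hmn, huniqq _ hmn π.1 hπIq (le_max_left _ _) (le_trans hmi h12),
          huniqt _ hmn π.2 hπIt (le_max_right _ _) (le_trans hmi h22)⟩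
      intro π hπ π' hπ' heq
      obtain ⟨h1, h2, h3⟩ := hmm π hπ
      obtain ⟨h1', h2', h3'⟩ := hmm π' hπ'
      rw [heq] at h2 h3
      exact Prod.ext (h2.trans h2'.symm) (h3.trans h3'.symm)
    calc PF.card ≤ (insert 0 (((Iq.image Prod.fst).erase 0) ∪
          ((It.image Prod.fst).erase 0))).card :=
          Finset.card_le_card_of_injOn _ hmaps hinj
      _ ≤ (((Iq.image Prod.fst).erase 0) ∪ ((It.image Prod.fst).erase 0)).card + 1 :=
          Finset.card_insert_le _ _
      _ ≤ ((Iq.image Prod.fst).erase 0).card + ((It.image Prod.fst).erase 0).card + 1 := by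
          have := Finset.card_union_le ((Iq.image Prod.fst).erase 0)
            ((It.image Prod.fst).erase 0)
          omega
      _ ≤ 2 * s - 1 := by
          have e1 := Finset.card_erase_of_mem h0q
          have e2 := Finset.card_erase_of_mem h0t
          have i1 : (Iq.image Prod.fst).card ≤ s := le_trans Finset.card_image_le hIqcard
          have i2 : (It.image Prod.fst).card ≤ s := le_trans Finset.card_image_le hItcard
          omega
  -- choose roots for interior crossings
  have hroot : ∀ c, ∃ r : ℝ, c ∈ Ci →
      ((Pq (Aq c) - Pt (Bt c)).eval r = 0 ∧ ((c:ℝ) - 1) ≤ r ∧ r < (c:ℝ) ∧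
        Pq (Aq c) - Pt (Bt c) ≠ 0) := by
    intro c
    by_cases hc : c ∈ Ci
    swap
    · exact ⟨0, fun h => absurd h hc⟩
    have hcC : c ∈ C := (Finset.mem_filter.1 hc).1
    have hpieces : Aq (c-1) = Aq c ∧ Bt (c-1) = Bt c := by
      have := (Finset.mem_filter.1 hc).2
      push_neg at this
      exact this
    obtain ⟨hc1, hcn, hsgn⟩ := hcross c hcC
    set f : Polynomial ℝ := Pq (Aq c) - Pt (Bt c) with hfdef
    have hevalc : u c = f.eval (c:ℝ) := by
      have e1 : q c = (Pq (Aq c)).eval (c:ℝ) :=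
        hPq (Aq c) (hAq c hcn).1 c (Finset.mem_Icc.2 ⟨(hAq c hcn).2.1, (hAq c hcn).2.2⟩)
      have e2 : t c = (Pt (Bt c)).eval (c:ℝ) :=
        hPt (Bt c) (hBt c hcn).1 c (Finset.mem_Icc.2 ⟨(hBt c hcn).2.1, (hBt c hcn).2.2⟩)
      rw [hfdef, Polynomial.eval_sub, ← e1, ← e2]
    have hc1n : c - 1 < n := by omega
    have hcast : ((c - 1 : ℕ) : ℝ) = (c:ℝ) - 1 := by
      have : (1:ℕ) ≤ c := hc1
      push_cast [Nat.cast_sub this]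
      ring
    have hevalc1 : u (c-1) = f.eval ((c:ℝ) - 1) := by
      have e1 : q (c-1) = (Pq (Aq (c-1))).eval ((c-1 : ℕ):ℝ) :=
        hPq (Aq (c-1)) (hAq (c-1) hc1n).1 (c-1)
          (Finset.mem_Icc.2 ⟨(hAq (c-1) hc1n).2.1, (hAq (c-1) hc1n).2.2⟩)
      have e2 : t (c-1) = (Pt (Bt (c-1))).eval ((c-1 : ℕ):ℝ) :=
        hPt (Bt (c-1)) (hBt (c-1) hc1n).1 (c-1)
          (Finset.mem_Icc.2 ⟨(hBt (c-1) hc1n).2.1, (hBt (c-1) hc1n).2.2⟩)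
      rw [hfdef, Polynomial.eval_sub, ← hcast, ← hpieces.1, ← hpieces.2, ← e1, ← e2]
    have hab : (c:ℝ) - 1 ≤ (c:ℝ) := by linarith
    rcases hsgn with ⟨h1, h2⟩ | ⟨h1, h2⟩
    · -- up-crossing
      have hfne : f ≠ 0 := by
        intro h
        rw [h] at hevalc
        simp at hevalc
        rw [hevalc] at h2
        exact absurd h2 (lt_irrefl 0)
      obtain ⟨r, hr1, hr2, hr3⟩ := poly_root_between hab
        (by rw [← hevalc1]; exact h1) (by rw [← hevalc]; exact h2)
      exact ⟨r, fun _ => ⟨hr3, hr1, hr2, hfne⟩⟩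
    · -- down-crossing
      have hfne : f ≠ 0 := by
        intro h
        rw [h] at hevalc
        simp at hevalc
        rw [hevalc] at h2
        exact absurd h2 (lt_irrefl 0)
      obtain ⟨r, hr1, hr2, hr3⟩ := poly_root_between (f := -f) hab
        (by rw [Polynomial.eval_neg, ← hevalc1]; linarith)
        (by rw [Polynomial.eval_neg, ← hevalc]; linarith)
      refine ⟨r, fun _ => ⟨?_, hr1, hr2, hfne⟩⟩
      rw [Polynomial.eval_neg, neg_eq_zero] at hr3
      exact hr3
  choose rf hrf using hroot
  have hCi : Ci.card ≤ PF.card * d := by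
    set T : Finset (((ℕ × ℕ) × (ℕ × ℕ)) × ℝ) := PF.biUnion
      (fun π => ((Pq π.1 - Pt π.2).roots.toFinset).image (fun r => (π, r))) with hTdef
    have hmaps : ∀ c ∈ Ci, ((Aq c, Bt c), rf c) ∈ T := by
      intro c hc
      have hcC : c ∈ C := (Finset.mem_filter.1 hc).1
      obtain ⟨hc1, hcn, -⟩ := hcross c hcC
      obtain ⟨hr0, hrge, hrlt, hfne⟩ := hrf c hc
      have hπ : (Aq c, Bt c) ∈ PF := by
        rw [hPFdef, Finset.mem_filter]
        refine ⟨Finset.mem_product.2 ⟨(hAq c hcn).1, (hBt c hcn).1⟩,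
          ⟨c, hcn, (hAq c hcn).2.1, (hAq c hcn).2.2, (hBt c hcn).2.1, (hBt c hcn).2.2⟩⟩
      rw [hTdef]
      apply Finset.mem_biUnion.2
      refine ⟨(Aq c, Bt c), hπ, Finset.mem_image.2 ⟨rf c, ?_, rfl⟩⟩
      rw [Multiset.mem_toFinset]
      exact Polynomial.mem_roots'.2 ⟨hfne, hr0⟩
    have hinj : ∀ c ∈ Ci, ∀ c' ∈ Ci,
        ((Aq c, Bt c), rf c) = ((Aq c', Bt c'), rf c') → c = c' := by
      have key : ∀ c ∈ Ci, ∀ c' ∈ Ci, c < c' → rf c ≠ rf c' := by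
        intro c hc c' hc' hlt
        obtain ⟨-, hrge, hrlt, -⟩ := hrf c hc
        obtain ⟨-, hrge', hrlt', -⟩ := hrf c' hc'
        have : (c:ℝ) ≤ (c':ℝ) - 1 := by
          have : (c:ℝ) + 1 ≤ (c':ℝ) := by exact_mod_cast Nat.succ_le_of_lt hlt
          linarith
        intro h
        rw [h] at hrlt
        linarith
      intro c hc c' hc' heq
      have : rf c = rf c' := congrArg Prod.snd heq
      by_contra hne
      rcases lt_or_gt_of_ne hne with h | h
      · exact key c hc c' hc' h this
      · exact key c' hc' c hc h this.symm
    calc Ci.card ≤ T.card := Finset.card_le_card_of_injOn _ hmaps hinj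
      _ ≤ PF.card * d := by
        apply Finset.card_biUnion_le_card_mul
        intro π hπ
        have hπIq : π.1 ∈ Iq := (Finset.mem_product.1 (Finset.mem_filter.1 hπ).1).1
        have hπIt : π.2 ∈ It := (Finset.mem_product.1 (Finset.mem_filter.1 hπ).1).2
        calc ((Pq π.1 - Pt π.2).roots.toFinset.image (fun r => (π, r))).card
            ≤ (Pq π.1 - Pt π.2).roots.toFinset.card := Finset.card_image_le
          _ ≤ Multiset.card (Pq π.1 - Pt π.2).roots := Multiset.toFinset_card_le _
          _ ≤ (Pq π.1 - Pt π.2).natDegree := Polynomial.card_roots' _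
          _ ≤ d := le_trans (Polynomial.natDegree_sub_le _ _)
              (max_le (hPqdeg π.1 hπIq) (hPtdeg π.2 hπIt))
  -- final arithmetic
  obtain ⟨s', rfl⟩ : ∃ s', s = s' + 1 := ⟨s - 1, by omega⟩
  have hcount : L.card ≤ (s' + 1) * (d + 1) := by
    have h1 : 2 * L.card ≤ L.card + D.card := by omega
    have h2 : Cb.card ≤ s' + s' := by
      have : (s' + 1) - 1 = s' := by omega
      omega
    have h3 : Ci.card ≤ (2 * s' + 1) * d := by
      have : 2 * (s' + 1) - 1 = 2 * s' + 1 := by omega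
      calc Ci.card ≤ PF.card * d := hCi
        _ ≤ (2 * s' + 1) * d := by
            apply Nat.mul_le_mul_right
            omega
    have h4 : 2 * L.card ≤ (s' + s') + (2 * s' + 1) * d + 2 := by omega
    nlinarith [h4]
  exact ⟨S, isUnion_of_card_left_endpoints hSsub hcount, hsum⟩

lemma sum_abs_eq_two_mul_pos {n : ℕ} {u : ℕ → ℝ} (hsum : ∑ i ∈ Finset.range n, u i = 0) :
    ∑ i ∈ Finset.range n, |u i|
      = 2 * ∑ i ∈ (Finset.range n).filter (fun i => 0 < u i), u i := by
  set T : ℝ := ∑ i ∈ (Finset.range n).filter (fun i => 0 < u i), u i with hT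
  have hsplit := Finset.sum_filter_add_sum_filter_not (Finset.range n) (fun i => 0 < u i) u
  have habs' : ∑ i ∈ Finset.range n, |u i| =
      ∑ i ∈ (Finset.range n).filter (fun i => 0 < u i), u i
      + ∑ i ∈ (Finset.range n).filter (fun i => ¬ 0 < u i), (-u i) := by
    rw [← Finset.sum_filter_add_sum_filter_not (Finset.range n) (fun i => 0 < u i) (fun i => |u i|)]
    congr 1
    · exact Finset.sum_congr rfl (fun i hi => abs_of_pos (Finset.mem_filter.1 hi).2)
    · exact Finset.sum_congr rfl (fun i hi => abs_of_nonpos (le_of_not_gt (Finset.mem_filter.1 hi).2))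
  have h2 : ∑ i ∈ (Finset.range n).filter (fun i => ¬ 0 < u i), (-u i) = T := by
    rw [Finset.sum_neg_distrib]
    have : ∑ i ∈ (Finset.range n).filter (fun i => ¬ 0 < u i), u i = -T := by
      rw [hT]; linarith [hsplit, hsum]
    rw [this, neg_neg]
  rw [habs', h2]; ring

lemma akDist_le_tvDist {n K : ℕ} {p q : ℕ → ℝ}
    (hp : ∑ i ∈ Finset.range n, p i = 1) (hq : ∑ i ∈ Finset.range n, q i = 1) :
    akDist n K p q ≤ tvDist n p q := by
  apply csSup_le (akSet_nonempty n K p q)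
  rintro x ⟨S, hS, rfl⟩
  rw [← Finset.sum_sub_distrib]
  have hsum0 : ∑ i ∈ Finset.range n, (p i - q i) = 0 := by
    rw [Finset.sum_sub_distrib, hp, hq]; ring
  exact abs_subset_sum_le hsum0 (isUnion_subset_range hS)

lemma tvDist_le_akDist {n s d : ℕ} {q t : ℕ → ℝ}
    (hq : IsPiecewisePoly n s d q) (ht : IsPiecewisePoly n s d t)
    (hqs : ∑ i ∈ Finset.range n, q i = 1) (hts : ∑ i ∈ Finset.range n, t i = 1) :
    tvDist n q t ≤ akDist n (s * (d + 1)) q t := by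
  obtain ⟨S, hSU, hSsum⟩ := key_exists_S n s d q t hq ht
  have hsum0 : ∑ i ∈ Finset.range n, (q i - t i) = 0 := by
    rw [Finset.sum_sub_distrib, hqs, hts]; ring
  have htv : tvDist n q t = ∑ i ∈ S, (q i - t i) := by
    rw [tvDist, hSsum, sum_abs_eq_two_mul_pos hsum0]
    ring
  have hnn : (0:ℝ) ≤ ∑ i ∈ S, (q i - t i) := by
    rw [hSsum]
    apply Finset.sum_nonneg
    intro i hi
    exact le_of_lt (Finset.mem_filter.1 hi).2
  calc tvDist n q t = ∑ i ∈ S, (q i - t i) := htv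
    _ ≤ |∑ i ∈ S, (q i - t i)| := le_abs_self _
    _ = |∑ i ∈ S, q i - ∑ i ∈ S, t i| := by rw [Finset.sum_sub_distrib]
    _ ≤ akDist n (s * (d + 1)) q t := le_akDist hSU


/-- Refinement via piecewise polynomial approximation: let `K = s(d+1)`. If `p` is
`(η, s)`-piecewise degree-`d` (i.e. within TV distance `η` of an `s`-piecewise degree-`d`
distribution), `p̂` satisfies `‖p - p̂‖_{A_K} ≤ ζ`, and `p*` is an `s`-piecewise degree-`d`
distribution minimizing `‖p̂ - p*‖_{A_K}` up to additive error `η`, then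
`TV(p, p*) ≤ 2ζ + 4η`. -/
theorem refinement_piecewise (n s d : ℕ) (η ζ : ℝ) (hη : 0 ≤ η) (hζ : 0 ≤ ζ)
    (p phat pstar : ℕ → ℝ)
    (hp : IsDistribution n p)
    (happrox : ∃ q : ℕ → ℝ, IsDistribution n q ∧ IsPiecewisePoly n s d q ∧ tvDist n p q ≤ η)
    (hclose : akDist n (s * (d + 1)) p phat ≤ ζ)
    (hstar_distr : IsDistribution n pstar)
    (hstar_piecewise : IsPiecewisePoly n s d pstar)
    (hmin : ∀ r : ℕ → ℝ, IsDistribution n r → IsPiecewisePoly n s d r →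
      akDist n (s * (d + 1)) phat pstar ≤ akDist n (s * (d + 1)) phat r + η) :
    tvDist n p pstar ≤ 2 * ζ + 4 * η := by
  obtain ⟨q, hqd, hqp, hqtv⟩ := happrox
  set K := s * (d + 1) with hK
  have h1 : akDist n K q p ≤ η :=
    le_trans (le_of_eq (akDist_comm n K q p))
      (le_trans (akDist_le_tvDist hp.2 hqd.2) hqtv)
  have h2 : akDist n K phat q ≤ ζ + η := by
    calc akDist n K phat q ≤ akDist n K phat p + akDist n K p q := akDist_triangle n K _ _ _
      _ ≤ ζ + η := by
        have e1 : akDist n K phat p ≤ ζ := le_trans (le_of_eq (akDist_comm n K phat p)) hclose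
        have e2 : akDist n K p q ≤ η := le_trans (akDist_le_tvDist hp.2 hqd.2) hqtv
        linarith
  have h3 : akDist n K phat pstar ≤ ζ + 2 * η := by
    have := hmin q hqd hqp
    linarith
  have h4 : akDist n K q pstar ≤ 2 * ζ + 3 * η := by
    calc akDist n K q pstar ≤ akDist n K q p + akDist n K p pstar := akDist_triangle n K _ _ _
      _ ≤ akDist n K q p + (akDist n K p phat + akDist n K phat pstar) := by
          linarith [akDist_triangle n K p phat pstar]
      _ ≤ 2 * ζ + 3 * η := by linarith
  have h5 : tvDist n q pstar ≤ 2 * ζ + 3 * η :=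
    le_trans (tvDist_le_akDist hqp hstar_piecewise hqd.2 hstar_distr.2) h4
  calc tvDist n p pstar ≤ tvDist n p q + tvDist n q pstar := tvDist_triangle n p q pstar
    _ ≤ 2 * ζ + 4 * η := by linarith
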